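/- Let π = a_1a_2⋯a_n ∈ S_n be a separable permutation with a_1 > a_n. Then π = π_A π_B where, for some 1 ≤ m < n, π_A is a permutation of the letters {n−m+1,…,n} and π_B is a permutation of the letters {1,…,n−m}, and F(Λ_π, q) = [n choose m]_q · F(Λ_{σ_A}, q) · F(Λ_{σ_B}, q), where σ_A ∈ S_m is obtained from π_A by subtracting n−m from each letter, σ_B ∈ S_{n−m} is π_B, and [n choose m]_q = [n]!/([m]![n−m]!). -/

import Mathlib

set_option maxHeartbeats 1000000


open Polynomial

namespace SepPerm

/-- The length (number of inversions) of a permutation of `Fin n`. -/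
def invCount {n : ℕ} (π : Equiv.Perm (Fin n)) : ℕ :=
  (Finset.univ.filter fun p : Fin n × Fin n => p.1 < p.2 ∧ π p.2 < π p.1).card

/-- The (right) weak Bruhat order: `u ≤ v` iff `ℓ(u) + ℓ(u⁻¹v) = ℓ(v)`. -/
def wle {n : ℕ} (u v : Equiv.Perm (Fin n)) : Prop :=
  invCount u + invCount (u⁻¹ * v) = invCount v

open scoped Classical in
/-- `F(Λ_π, q) = ∑_{u ≤ π} q^{ℓ(u)}`, rank generating function of `[id, π]`. -/
noncomputable def FLam {n : ℕ} (π : Equiv.Perm (Fin n)) : Polynomial ℤ :=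
  ∑ u ∈ Finset.univ.filter (fun u => wle u π), X ^ invCount u

open scoped Classical in
/-- `F(V_π, q) = ∑_{v ≥ π} q^{ℓ(v) - ℓ(π)}`, rank generating function of `[π, w₀]`. -/
noncomputable def FV {n : ℕ} (π : Equiv.Perm (Fin n)) : Polynomial ℤ :=
  ∑ v ∈ Finset.univ.filter (fun v => wle π v), X ^ (invCount v - invCount π)

/-- A permutation is separable iff it avoids the patterns 3142 and 2413. -/
def IsSeparable {n : ℕ} (π : Equiv.Perm (Fin n)) : Prop :=
  (¬ ∃ i j k h : Fin n, i < j ∧ j < k ∧ k < h ∧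
      π j < π h ∧ π h < π i ∧ π i < π k) ∧
  (¬ ∃ i j k h : Fin n, i < j ∧ j < k ∧ k < h ∧
      π k < π i ∧ π i < π h ∧ π h < π j)

/-- The longest element `w₀ = n, n-1, …, 1`. -/
def w0 (n : ℕ) : Equiv.Perm (Fin n) := Fin.revPerm

/-- The complement `π^c`, with `π^c(i) = n + 1 - π(i)` (one-indexed). -/
def compl {n : ℕ} (π : Equiv.Perm (Fin n)) : Equiv.Perm (Fin n) := w0 n * π

/-- `[k] = 1 + q + ⋯ + q^{k-1}`. -/
noncomputable def qnum (k : ℕ) : Polynomial ℤ := ∑ i ∈ Finset.range k, X ^ i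

/-- `[N]! = [1][2]⋯[N]`. -/
noncomputable def qfact (N : ℕ) : Polynomial ℤ := ∏ k ∈ Finset.range N, qnum (k + 1)

/-- The inversion poset `P_π` on the letters: `x ≤_P y` iff `x ≤ y` and `π⁻¹x ≤ π⁻¹y`. -/
def invLe {n : ℕ} (π : Equiv.Perm (Fin n)) (x y : Fin n) : Prop :=
  x ≤ y ∧ π⁻¹ x ≤ π⁻¹ y

/-- `σ` is a linear extension of the order `r`: whenever `i <_r j`, `i` precedes `j`
in the one-line notation of `σ` (i.e. the position `σ⁻¹ i` comes before `σ⁻¹ j`). -/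
def IsLinExt {N : ℕ} (r : Fin N → Fin N → Prop) (σ : Equiv.Perm (Fin N)) : Prop :=
  ∀ i j, r i j → i ≠ j → σ.symm i < σ.symm j

open scoped Classical in
/-- `F(𝓛(P), q) = ∑_{σ ∈ 𝓛(P)} q^{ℓ(σ)}`, generating function of linear extensions
by number of inversions. -/
noncomputable def FLin {N : ℕ} (r : Fin N → Fin N → Prop) : Polynomial ℤ :=
  ∑ σ ∈ Finset.univ.filter (fun σ => IsLinExt r σ), X ^ invCount σ

open Finset

/-- value-pair inversion set -/
def Iset {N : ℕ} (w : Equiv.Perm (Fin N)) : Finset (Fin N × Fin N) :=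
  Finset.univ.filter fun p : Fin N × Fin N => p.1 < p.2 ∧ w.symm p.2 < w.symm p.1

lemma mem_Iset {N : ℕ} {w : Equiv.Perm (Fin N)} {p : Fin N × Fin N} :
    p ∈ Iset w ↔ p.1 < p.2 ∧ w.symm p.2 < w.symm p.1 := by
  simp [Iset]

lemma invCount_eq_card_Iset {N : ℕ} (w : Equiv.Perm (Fin N)) :
    invCount w = (Iset w).card := by
  refine Finset.card_nbij' (fun p => (w p.2, w p.1)) (fun p => (w.symm p.2, w.symm p.1)) ?_ ?_ ?_ ?_
  · intro p hp
    simp only [mem_coe, mem_filter, mem_univ, true_and] at hp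
    simp [mem_Iset, hp.1, hp.2]
  · intro p hp
    simp only [mem_coe, mem_Iset] at hp
    simp only [mem_coe, mem_filter, mem_univ, true_and, Equiv.apply_symm_apply]
    exact ⟨hp.2, hp.1⟩
  · intro p hp; simp
  · intro p hp; simp

lemma invCount_inv_mul {N : ℕ} (u v : Equiv.Perm (Fin N)) :
    invCount (u⁻¹ * v) = ((Iset u \ Iset v) ∪ (Iset v \ Iset u)).card := by
  classical
  refine Finset.card_nbij'
    (fun p => if v p.1 < v p.2 then (v p.1, v p.2) else (v p.2, v p.1))
    (fun q => if v.symm q.1 < v.symm q.2 then (v.symm q.1, v.symm q.2)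
      else (v.symm q.2, v.symm q.1)) ?_ ?_ ?_ ?_
  · intro p hp
    change p ∈ Finset.univ.filter (fun p : Fin N × Fin N => p.1 < p.2 ∧ (u⁻¹ * v) p.2 < (u⁻¹ * v) p.1) at hp
    rw [mem_filter] at hp
    simp only [mem_coe, mem_filter, mem_univ, true_and, Equiv.Perm.mul_apply,
      Equiv.symm_apply_apply, Equiv.Perm.inv_def] at hp
    obtain ⟨h12, hz⟩ := hp
    have hne : v p.1 ≠ v p.2 := fun h => absurd (v.injective h ▸ h12) (lt_irrefl _)
    dsimp only
    rcases lt_or_gt_of_ne hne with hv | hv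
    · rw [if_pos hv]
      simp only [mem_coe, mem_union, mem_sdiff, mem_Iset, Equiv.symm_apply_apply]
      exact Or.inl ⟨⟨hv, hz⟩, fun hc => absurd hc.2 (by simp [not_lt, le_of_lt h12])⟩
    · rw [if_neg (not_lt.mpr (le_of_lt hv))]
      simp only [mem_coe, mem_union, mem_sdiff, mem_Iset, Equiv.symm_apply_apply]
      exact Or.inr ⟨⟨hv, h12⟩, fun hc => absurd hc.2 (by simp [not_lt, le_of_lt hz])⟩
  · intro q hq
    simp only [mem_coe, mem_union, mem_sdiff, mem_Iset] at hq
    change _ ∈ Finset.univ.filter (fun p : Fin N × Fin N => p.1 < p.2 ∧ (u⁻¹ * v) p.2 < (u⁻¹ * v) p.1)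
    rw [mem_filter]
    simp only [mem_coe, mem_filter, mem_univ, true_and, Equiv.Perm.mul_apply, Equiv.Perm.inv_def]
    rcases hq with ⟨⟨h12, hu⟩, hnv⟩ | ⟨⟨h12, hv⟩, hnu⟩
    · have hv : v.symm q.1 < v.symm q.2 := by
        rcases lt_trichotomy (v.symm q.1) (v.symm q.2) with h | h | h
        · exact h
        · exact absurd (v.symm.injective h) (by intro e; rw [e] at h12; exact lt_irrefl _ h12)
        · exact absurd ⟨h12, h⟩ hnv
      rw [if_pos hv]
      simpa using ⟨hv, hu⟩
    · rw [if_neg (not_lt.mpr (le_of_lt hv))]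
      refine ⟨hv, ?_⟩
      simp only [Equiv.apply_symm_apply]
      rcases lt_trichotomy (u.symm q.1) (u.symm q.2) with h | h | h
      · exact h
      · exact absurd (u.symm.injective h) (by intro e; rw [e] at h12; exact lt_irrefl _ h12)
      · exact absurd ⟨h12, h⟩ hnu
  · intro p hp
    change p ∈ Finset.univ.filter (fun p : Fin N × Fin N => p.1 < p.2 ∧ (u⁻¹ * v) p.2 < (u⁻¹ * v) p.1) at hp
    rw [mem_filter] at hp
    simp only [mem_coe, mem_filter, mem_univ, true_and, Equiv.Perm.mul_apply, Equiv.Perm.inv_def] at hp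
    have hne : v p.1 ≠ v p.2 := fun h => absurd (v.injective h ▸ hp.1) (lt_irrefl _)
    dsimp only
    rcases lt_or_gt_of_ne hne with hv | hv
    · rw [if_pos hv]; rw [if_pos (by simpa using hp.1)]; simp
    · rw [if_neg (not_lt.mpr (le_of_lt hv))]
      rw [if_neg (by simp [not_lt, le_of_lt hp.1])]
      simp
  · intro q hq
    have h12 : q.1 < q.2 := by
      simp only [mem_coe, mem_union, mem_sdiff, mem_Iset] at hq
      rcases hq with h | h <;> exact h.1.1
    dsimp only
    by_cases hv : v.symm q.1 < v.symm q.2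
    · rw [if_pos hv]; rw [if_pos (by simpa using h12)]; simp
    · rw [if_neg hv]
      rw [if_neg (by simp only [Equiv.apply_symm_apply]; exact not_lt.mpr (le_of_lt h12))]
      simp

lemma wle_iff_subset {N : ℕ} (u v : Equiv.Perm (Fin N)) :
    wle u v ↔ Iset u ⊆ Iset v := by
  classical
  unfold wle
  rw [invCount_eq_card_Iset u, invCount_eq_card_Iset v, invCount_inv_mul]
  rw [Finset.card_union_of_disjoint (disjoint_sdiff_sdiff)]
  have h1 := Finset.card_sdiff_add_card_inter (Iset u) (Iset v)
  have h2 := Finset.card_sdiff_add_card_inter (Iset v) (Iset u)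
  rw [Finset.inter_comm] at h2
  constructor
  · intro h
    have : (Iset u \ Iset v).card = 0 := by omega
    rw [← Finset.sdiff_eq_empty_iff_subset]
    exact Finset.card_eq_zero.mp this
  · intro h
    have : (Iset u \ Iset v).card = 0 :=
      Finset.card_eq_zero.mpr (Finset.sdiff_eq_empty_iff_subset.mpr h)
    omega

open Finset in
lemma card_filter_lt_val {n : ℕ} (c : ℕ) (hc : c ≤ n) :
    (Finset.univ.filter fun v : Fin n => (v : ℕ) < c).card = c := by
  classical
  have : (Finset.univ.filter fun v : Fin n => (v : ℕ) < c)
      = Finset.map (Fin.castLEEmb hc) Finset.univ := by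
    ext v
    simp only [Finset.mem_filter, Finset.mem_univ, true_and, Finset.mem_map]
    constructor
    · intro hv
      exact ⟨⟨(v : ℕ), hv⟩, by ext; simp⟩
    · rintro ⟨k, rfl⟩
      simpa using k.2
  rw [this]
  simp

lemma card_filter_le_val {n : ℕ} (c : ℕ) (hc : c ≤ n) :
    (Finset.univ.filter fun v : Fin n => c ≤ (v : ℕ)).card = n - c := by
  classical
  have h := Finset.card_filter_add_card_filter_not
    (s := (Finset.univ : Finset (Fin n))) (p := fun v : Fin n => (v : ℕ) < c)
  rw [card_filter_lt_val c hc] at h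
  have h2 : (Finset.univ.filter fun v : Fin n => ¬ (v : ℕ) < c)
      = Finset.univ.filter fun v : Fin n => c ≤ (v : ℕ) := by
    simp [not_lt]
  rw [h2] at h
  simp only [Finset.card_univ, Fintype.card_fin] at h
  omega

def topSet (m : ℕ) {n : ℕ} (u : Equiv.Perm (Fin n)) : Finset (Fin n) :=
  Finset.univ.filter fun p => n - m ≤ (u p : ℕ)

lemma card_topSet {n m : ℕ} (hm : m ≤ n) (u : Equiv.Perm (Fin n)) :
    (topSet m u).card = m := by
  classical
  have : (topSet m u).card = ((Finset.univ.filter fun v : Fin n => n - m ≤ (v : ℕ))).card := by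
    refine Finset.card_nbij (fun p => u p) ?_ ?_ ?_
    · intro p hp
      simp only [topSet, Finset.mem_coe, Finset.mem_filter, Finset.mem_univ, true_and] at hp ⊢
      exact hp
    · exact Set.injOn_of_injective u.injective
    · intro v hv
      refine ⟨u.symm v, ?_, by simp⟩
      simp only [topSet, Finset.coe_filter, Finset.mem_univ, true_and, Set.mem_setOf_eq,
        Equiv.apply_symm_apply] at hv ⊢
      exact hv
  rw [this, card_filter_le_val _ (by omega)]
  omega

lemma card_compl_topSet {n m : ℕ} (hm : m ≤ n) (u : Equiv.Perm (Fin n)) :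
    ((topSet m u)ᶜ).card = n - m := by
  rw [Finset.card_compl, card_topSet hm u]
  simp

def crossN (n : ℕ) (s : Finset (Fin n)) : ℕ :=
  (Finset.univ.filter fun p : Fin n × Fin n => p.1 ∈ s ∧ p.2 ∉ s ∧ p.1 < p.2).card

noncomputable def aPerm {n m : ℕ} (hm : m ≤ n) (u : Equiv.Perm (Fin n)) : Equiv.Perm (Fin m) :=
  Equiv.ofBijective (fun k =>
    (⟨(u ((topSet m u).orderEmbOfFin (card_topSet hm u) k) : ℕ) - (n - m), by
      have h1 : n - m ≤ (u ((topSet m u).orderEmbOfFin (card_topSet hm u) k) : ℕ) :=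
        (Finset.mem_filter.mp (Finset.orderEmbOfFin_mem (topSet m u) (card_topSet hm u) k)).2
      have h2 := (u ((topSet m u).orderEmbOfFin (card_topSet hm u) k)).2
      omega⟩ : Fin m))
    (by
      rw [← Finite.injective_iff_bijective]
      intro k l hkl
      simp only [Fin.mk.injEq] at hkl
      have hk : n - m ≤ (u ((topSet m u).orderEmbOfFin (card_topSet hm u) k) : ℕ) :=
        (Finset.mem_filter.mp (Finset.orderEmbOfFin_mem (topSet m u) (card_topSet hm u) k)).2
      have hl : n - m ≤ (u ((topSet m u).orderEmbOfFin (card_topSet hm u) l) : ℕ) :=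
        (Finset.mem_filter.mp (Finset.orderEmbOfFin_mem (topSet m u) (card_topSet hm u) l)).2
      have : u ((topSet m u).orderEmbOfFin (card_topSet hm u) k)
          = u ((topSet m u).orderEmbOfFin (card_topSet hm u) l) := by
        apply Fin.ext; omega
      exact ((topSet m u).orderEmbOfFin (card_topSet hm u)).injective (u.injective this))

noncomputable def bPerm {n m : ℕ} (hm : m ≤ n) (u : Equiv.Perm (Fin n)) : Equiv.Perm (Fin (n - m)) :=
  Equiv.ofBijective (fun k =>
    (⟨(u (((topSet m u)ᶜ).orderEmbOfFin (card_compl_topSet hm u) k) : ℕ), by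
      have h1 := Finset.orderEmbOfFin_mem ((topSet m u)ᶜ) (card_compl_topSet hm u) k
      rw [Finset.mem_compl] at h1
      have h2 : ¬ n - m ≤ (u (((topSet m u)ᶜ).orderEmbOfFin (card_compl_topSet hm u) k) : ℕ) :=
        fun hc => h1 (Finset.mem_filter.mpr ⟨Finset.mem_univ _, hc⟩)
      omega⟩ : Fin (n - m)))
    (by
      rw [← Finite.injective_iff_bijective]
      intro k l hkl
      simp only [Fin.mk.injEq] at hkl
      have : u (((topSet m u)ᶜ).orderEmbOfFin (card_compl_topSet hm u) k)
          = u (((topSet m u)ᶜ).orderEmbOfFin (card_compl_topSet hm u) l) := by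
        apply Fin.ext; exact hkl
      exact (((topSet m u)ᶜ).orderEmbOfFin (card_compl_topSet hm u)).injective (u.injective this))

lemma aPerm_val {n m : ℕ} (hm : m ≤ n) (u : Equiv.Perm (Fin n)) (k : Fin m) :
    (aPerm hm u k : ℕ)
      = (u ((topSet m u).orderEmbOfFin (card_topSet hm u) k) : ℕ) - (n - m) := rfl

lemma bPerm_val {n m : ℕ} (hm : m ≤ n) (u : Equiv.Perm (Fin n)) (k : Fin (n - m)) :
    (bPerm hm u k : ℕ)
      = (u (((topSet m u)ᶜ).orderEmbOfFin (card_compl_topSet hm u) k) : ℕ) := rfl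

lemma symm_top {n m : ℕ} (hm : m ≤ n) (u : Equiv.Perm (Fin n)) (x : Fin m)
    (hx : n - m + (x : ℕ) < n) :
    u.symm ⟨n - m + (x : ℕ), hx⟩
      = (topSet m u).orderEmbOfFin (card_topSet hm u) ((aPerm hm u).symm x) := by
  set k := (aPerm hm u).symm x with hk
  have h1 : aPerm hm u k = x := Equiv.apply_symm_apply _ _
  have h2 : (aPerm hm u k : ℕ) = (x : ℕ) := congrArg Fin.val h1
  rw [aPerm_val] at h2
  have h3 : n - m ≤ (u ((topSet m u).orderEmbOfFin (card_topSet hm u) k) : ℕ) :=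
    (Finset.mem_filter.mp (Finset.orderEmbOfFin_mem (topSet m u) (card_topSet hm u) k)).2
  have h4 : u ((topSet m u).orderEmbOfFin (card_topSet hm u) k) = ⟨n - m + (x : ℕ), hx⟩ := by
    apply Fin.ext
    simp only []
    omega
  rw [← h4]
  exact Equiv.symm_apply_apply _ _

lemma symm_bot {n m : ℕ} (hm : m ≤ n) (u : Equiv.Perm (Fin n)) (x : Fin (n - m))
    (hx : (x : ℕ) < n) :
    u.symm ⟨(x : ℕ), hx⟩
      = ((topSet m u)ᶜ).orderEmbOfFin (card_compl_topSet hm u) ((bPerm hm u).symm x) := by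
  set k := (bPerm hm u).symm x with hk
  have h1 : bPerm hm u k = x := Equiv.apply_symm_apply _ _
  have h2 : (bPerm hm u k : ℕ) = (x : ℕ) := congrArg Fin.val h1
  rw [bPerm_val] at h2
  have h4 : u (((topSet m u)ᶜ).orderEmbOfFin (card_compl_topSet hm u) k) = ⟨(x : ℕ), hx⟩ := by
    apply Fin.ext
    exact h2
  rw [← h4]
  exact Equiv.symm_apply_apply _ _

lemma Iset_top_iff {n m : ℕ} (hm : m ≤ n) (u : Equiv.Perm (Fin n)) (x y : Fin m)
    (hx : n - m + (x : ℕ) < n) (hy : n - m + (y : ℕ) < n) :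
    ((⟨n - m + (x : ℕ), hx⟩ : Fin n), (⟨n - m + (y : ℕ), hy⟩ : Fin n)) ∈ Iset u
      ↔ (x, y) ∈ Iset (aPerm hm u) := by
  simp only [mem_Iset]
  rw [symm_top hm u x hx, symm_top hm u y hy]
  have h1 : ((⟨n - m + (x : ℕ), hx⟩ : Fin n) < ⟨n - m + (y : ℕ), hy⟩) ↔ x < y := by
    rw [Fin.lt_def, Fin.lt_def]
    simp only []
    omega
  have h2 : (topSet m u).orderEmbOfFin (card_topSet hm u) ((aPerm hm u).symm y)
        < (topSet m u).orderEmbOfFin (card_topSet hm u) ((aPerm hm u).symm x)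
      ↔ (aPerm hm u).symm y < (aPerm hm u).symm x :=
    OrderEmbedding.lt_iff_lt _
  rw [h1, h2]

lemma Iset_bot_iff {n m : ℕ} (hm : m ≤ n) (u : Equiv.Perm (Fin n)) (x y : Fin (n - m))
    (hx : (x : ℕ) < n) (hy : (y : ℕ) < n) :
    ((⟨(x : ℕ), hx⟩ : Fin n), (⟨(y : ℕ), hy⟩ : Fin n)) ∈ Iset u
      ↔ (x, y) ∈ Iset (bPerm hm u) := by
  simp only [mem_Iset]
  rw [symm_bot hm u x hx, symm_bot hm u y hy]
  have h1 : ((⟨(x : ℕ), hx⟩ : Fin n) < ⟨(y : ℕ), hy⟩) ↔ x < y := by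
    rw [Fin.lt_def, Fin.lt_def]
  have h2 : ((topSet m u)ᶜ).orderEmbOfFin (card_compl_topSet hm u) ((bPerm hm u).symm y)
        < ((topSet m u)ᶜ).orderEmbOfFin (card_compl_topSet hm u) ((bPerm hm u).symm x)
      ↔ (bPerm hm u).symm y < (bPerm hm u).symm x :=
    OrderEmbedding.lt_iff_lt _
  rw [h1, h2]
lemma invCount_decomp {n m : ℕ} (hm : m ≤ n) (u : Equiv.Perm (Fin n)) :
    invCount u = crossN n (topSet m u) + (invCount (aPerm hm u) + invCount (bPerm hm u)) := by
  classical
  rw [invCount_eq_card_Iset]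
  have hsplit1 := Finset.card_filter_add_card_filter_not
    (s := Iset u) (p := fun p : Fin n × Fin n => n - m ≤ (p.1 : ℕ))
  have hsplit2 := Finset.card_filter_add_card_filter_not
    (s := (Iset u).filter fun p : Fin n × Fin n => ¬ n - m ≤ (p.1 : ℕ))
    (p := fun p : Fin n × Fin n => n - m ≤ (p.2 : ℕ))
  rw [Finset.filter_filter, Finset.filter_filter] at hsplit2
  have hA : ((Iset u).filter fun p : Fin n × Fin n => n - m ≤ (p.1 : ℕ)).card
      = invCount (aPerm hm u) := by
    rw [invCount_eq_card_Iset]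
    refine Finset.card_bij'
      (fun p hp => ((⟨(p.1 : ℕ) - (n - m), ?_⟩ : Fin m), (⟨(p.2 : ℕ) - (n - m), ?_⟩ : Fin m)))
      (fun q hq => ((⟨n - m + (q.1 : ℕ), ?_⟩ : Fin n), (⟨n - m + (q.2 : ℕ), ?_⟩ : Fin n)))
      ?_ ?_ ?_ ?_
    case refine_1 =>
      have h1 := (Finset.mem_filter.mp hp).2
      have := p.1.2; omega
    case refine_2 =>
      have h1 := (Finset.mem_filter.mp hp).2
      have h2 := (mem_Iset.mp (Finset.mem_filter.mp hp).1).1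
      rw [Fin.lt_def] at h2
      have := p.2.2; omega
    case refine_3 =>
      have := q.1.2; omega
    case refine_4 =>
      have := q.2.2; omega
    · intro p hp
      rw [Finset.mem_filter] at hp
      obtain ⟨hpI, hp1⟩ := hp
      rw [mem_Iset] at hpI
      have hp2 : n - m ≤ (p.2 : ℕ) := le_trans hp1 (le_of_lt hpI.1)
      have e1 : (⟨n - m + ((p.1 : ℕ) - (n - m)), by have := p.1.2; omega⟩ : Fin n) = p.1 := by
        apply Fin.ext; simp only []; omega
      have e2 : (⟨n - m + ((p.2 : ℕ) - (n - m)), by have := p.2.2; omega⟩ : Fin n) = p.2 := by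
        apply Fin.ext; simp only []; omega
      rw [← Iset_top_iff hm u _ _ (by have := p.1.2; omega) (by have := p.2.2; omega)]
      rw [show ((⟨n - m + ((⟨(p.1 : ℕ) - (n - m), _⟩ : Fin m) : ℕ), _⟩ : Fin n),
          (⟨n - m + ((⟨(p.2 : ℕ) - (n - m), _⟩ : Fin m) : ℕ), _⟩ : Fin n)) = (p.1, p.2) from
        Prod.ext e1 e2]
      exact mem_Iset.mpr hpI
    · intro q hq
      rw [Finset.mem_filter]
      constructor
      · rw [← Prod.mk.eta (p := q)] at hq
        exact (Iset_top_iff hm u q.1 q.2 _ _).mpr hq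
      · dsimp only; omega
    · intro p hp
      rw [Finset.mem_filter, mem_Iset] at hp
      have hp2 : n - m ≤ (p.2 : ℕ) := le_trans hp.2 (le_of_lt hp.1.1)
      have hp1 := hp.2
      apply Prod.ext <;> apply Fin.ext <;> simp only [] <;> omega
    · intro q hq
      apply Prod.ext <;> apply Fin.ext <;> simp only [] <;> omega
  have hB : ((Iset u).filter fun p : Fin n × Fin n =>
        ¬ n - m ≤ (p.1 : ℕ) ∧ ¬ n - m ≤ (p.2 : ℕ)).card
      = invCount (bPerm hm u) := by
    rw [invCount_eq_card_Iset]
    refine Finset.card_bij'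
      (fun p hp => ((⟨(p.1 : ℕ), ?_⟩ : Fin (n - m)), (⟨(p.2 : ℕ), ?_⟩ : Fin (n - m))))
      (fun q hq => ((⟨(q.1 : ℕ), ?_⟩ : Fin n), (⟨(q.2 : ℕ), ?_⟩ : Fin n)))
      ?_ ?_ ?_ ?_
    case refine_1 =>
      rw [Finset.mem_filter] at hp; omega
    case refine_2 =>
      rw [Finset.mem_filter] at hp; omega
    case refine_3 =>
      have := q.1.2; omega
    case refine_4 =>
      have := q.2.2; omega
    · intro p hp
      rw [Finset.mem_filter] at hp
      obtain ⟨hpI, hp1, hp2⟩ := hp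
      rw [← Iset_bot_iff hm u _ _ (by have := p.1.2; omega) (by have := p.2.2; omega)]
      have e1 : (⟨((⟨(p.1 : ℕ), by omega⟩ : Fin (n - m)) : ℕ), by have := p.1.2; omega⟩ : Fin n)
          = p.1 := by apply Fin.ext; rfl
      have e2 : (⟨((⟨(p.2 : ℕ), by omega⟩ : Fin (n - m)) : ℕ), by have := p.2.2; omega⟩ : Fin n)
          = p.2 := by apply Fin.ext; rfl
      rw [show ((⟨((⟨(p.1 : ℕ), _⟩ : Fin (n - m)) : ℕ), _⟩ : Fin n),
          (⟨((⟨(p.2 : ℕ), _⟩ : Fin (n - m)) : ℕ), _⟩ : Fin n)) = (p.1, p.2) from Prod.ext e1 e2]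
      exact hpI
    · intro q hq
      rw [Finset.mem_filter]
      refine ⟨?_, by dsimp only; have := q.1.2; omega, by dsimp only; have := q.2.2; omega⟩
      rw [← Prod.mk.eta (p := q)] at hq
      exact (Iset_bot_iff hm u q.1 q.2 _ _).mpr hq
    · intro p hp
      apply Prod.ext <;> apply Fin.ext <;> rfl
    · intro q hq
      apply Prod.ext <;> apply Fin.ext <;> rfl
  have hC : ((Iset u).filter fun p : Fin n × Fin n =>
        ¬ n - m ≤ (p.1 : ℕ) ∧ n - m ≤ (p.2 : ℕ)).card
      = crossN n (topSet m u) := by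
    unfold crossN
    refine Finset.card_bij'
      (fun p _ => (u.symm p.2, u.symm p.1)) (fun q _ => (u q.2, u q.1)) ?_ ?_ ?_ ?_
    · intro p hp
      rw [Finset.mem_filter, mem_Iset] at hp
      obtain ⟨⟨h12, hinv⟩, hp1, hp2⟩ := hp
      rw [Finset.mem_filter]
      refine ⟨Finset.mem_univ _, ?_, ?_, hinv⟩
      · exact Finset.mem_filter.mpr ⟨Finset.mem_univ _, by simpa using hp2⟩
      · intro hc
        exact hp1 (by simpa using (Finset.mem_filter.mp hc).2)
    · intro q hq
      rw [Finset.mem_filter] at hq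
      obtain ⟨-, hq1, hq2, h12⟩ := hq
      have ht1 : n - m ≤ (u q.1 : ℕ) := (Finset.mem_filter.mp hq1).2
      have ht2 : ¬ n - m ≤ (u q.2 : ℕ) := fun hc => hq2 (Finset.mem_filter.mpr ⟨Finset.mem_univ _, hc⟩)
      rw [Finset.mem_filter, mem_Iset]
      refine ⟨⟨?_, by simpa using h12⟩, by simpa using ht2, by simpa using ht1⟩
      exact show u q.2 < u q.1 by rw [Fin.lt_def]; omega
    · intro p hp
      simp
    · intro q hq
      simp
  omega
lemma card_le_of_card_eq {n m : ℕ} {s : Finset (Fin n)} (hs : s.card = m) : m ≤ n := by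
  have := Finset.card_le_univ s
  rw [hs] at this
  simpa using this

lemma card_compl_of_card_eq {n m : ℕ} {s : Finset (Fin n)} (hs : s.card = m) :
    sᶜ.card = n - m := by
  rw [Finset.card_compl, hs]
  simp

noncomputable def asmPerm {n m : ℕ} (s : Finset (Fin n)) (hs : s.card = m)
    (a : Equiv.Perm (Fin m)) (b : Equiv.Perm (Fin (n - m))) : Equiv.Perm (Fin n) :=
  Equiv.ofBijective (fun p =>
    if h : p ∈ s then
      (⟨n - m + (a ((s.orderIsoOfFin hs).symm ⟨p, h⟩) : ℕ), by
        have hmn : m ≤ n := card_le_of_card_eq hs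
        have := (a ((s.orderIsoOfFin hs).symm ⟨p, h⟩)).2
        omega⟩ : Fin n)
    else
      (⟨(b ((sᶜ.orderIsoOfFin (card_compl_of_card_eq hs)).symm ⟨p, Finset.mem_compl.mpr h⟩) : ℕ), by
        have := (b ((sᶜ.orderIsoOfFin (card_compl_of_card_eq hs)).symm ⟨p, Finset.mem_compl.mpr h⟩)).2
        omega⟩ : Fin n))
    (by
      rw [← Finite.injective_iff_bijective]
      intro p q hpq
      by_cases hp : p ∈ s <;> by_cases hq : q ∈ s <;>
        simp only [dif_pos, dif_neg, hp, hq, dite_true, dite_false, Fin.mk.injEq] at hpq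
      · have h1 : (a ((s.orderIsoOfFin hs).symm ⟨p, hp⟩)) = (a ((s.orderIsoOfFin hs).symm ⟨q, hq⟩)) := by
          apply Fin.ext; omega
        have h2 := (s.orderIsoOfFin hs).symm.injective (a.injective h1)
        exact Subtype.ext_iff.mp h2
      · exfalso
        have := (b ((sᶜ.orderIsoOfFin (card_compl_of_card_eq hs)).symm ⟨q, Finset.mem_compl.mpr hq⟩)).2
        omega
      · exfalso
        have := (b ((sᶜ.orderIsoOfFin (card_compl_of_card_eq hs)).symm ⟨p, Finset.mem_compl.mpr hp⟩)).2
        omega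
      · have h1 : (b ((sᶜ.orderIsoOfFin (card_compl_of_card_eq hs)).symm ⟨p, Finset.mem_compl.mpr hp⟩))
            = (b ((sᶜ.orderIsoOfFin (card_compl_of_card_eq hs)).symm ⟨q, Finset.mem_compl.mpr hq⟩)) := by
          apply Fin.ext; omega
        have h2 := (sᶜ.orderIsoOfFin (card_compl_of_card_eq hs)).symm.injective (b.injective h1)
        exact Subtype.ext_iff.mp h2)

lemma asmPerm_val_mem {n m : ℕ} (s : Finset (Fin n)) (hs : s.card = m)
    (a : Equiv.Perm (Fin m)) (b : Equiv.Perm (Fin (n - m))) {p : Fin n} (hp : p ∈ s) :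
    (asmPerm s hs a b p : ℕ) = n - m + (a ((s.orderIsoOfFin hs).symm ⟨p, hp⟩) : ℕ) := by
  show ((if h : p ∈ s then _ else _ : Fin n) : ℕ) = _
  rw [dif_pos hp]

lemma asmPerm_val_not_mem {n m : ℕ} (s : Finset (Fin n)) (hs : s.card = m)
    (a : Equiv.Perm (Fin m)) (b : Equiv.Perm (Fin (n - m))) {p : Fin n} (hp : p ∉ s) :
    (asmPerm s hs a b p : ℕ)
      = (b ((sᶜ.orderIsoOfFin (card_compl_of_card_eq hs)).symm ⟨p, Finset.mem_compl.mpr hp⟩) : ℕ) := by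
  show ((if h : p ∈ s then _ else _ : Fin n) : ℕ) = _
  rw [dif_neg hp]

lemma topSet_asmPerm {n m : ℕ} (s : Finset (Fin n)) (hs : s.card = m)
    (a : Equiv.Perm (Fin m)) (b : Equiv.Perm (Fin (n - m))) :
    topSet m (asmPerm s hs a b) = s := by
  ext p
  rw [topSet, Finset.mem_filter]
  constructor
  · rintro ⟨-, h⟩
    by_contra hp
    rw [asmPerm_val_not_mem s hs a b hp] at h
    have := (b ((sᶜ.orderIsoOfFin (card_compl_of_card_eq hs)).symm ⟨p, Finset.mem_compl.mpr hp⟩)).2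
    omega
  · intro hp
    refine ⟨Finset.mem_univ _, ?_⟩
    rw [asmPerm_val_mem s hs a b hp]
    omega
lemma orderEmb_topSet_asm {n m : ℕ} (s : Finset (Fin n)) (hs : s.card = m)
    (a : Equiv.Perm (Fin m)) (b : Equiv.Perm (Fin (n - m))) (hm : m ≤ n) (k : Fin m) :
    (topSet m (asmPerm s hs a b)).orderEmbOfFin (card_topSet hm (asmPerm s hs a b)) k
      = s.orderEmbOfFin hs k := by
  have hset := topSet_asmPerm s hs a b
  have hmem : ∀ x : Fin m,
      (topSet m (asmPerm s hs a b)).orderEmbOfFin (card_topSet hm (asmPerm s hs a b)) x ∈ s := by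
    intro x
    exact Finset.mem_of_subset (le_of_eq hset) (Finset.orderEmbOfFin_mem _ _ x)
  have h2 := Finset.orderEmbOfFin_unique hs hmem
    (((topSet m (asmPerm s hs a b)).orderEmbOfFin (card_topSet hm (asmPerm s hs a b))).strictMono)
  exact congrFun h2 k

lemma orderEmb_compl_topSet_asm {n m : ℕ} (s : Finset (Fin n)) (hs : s.card = m)
    (a : Equiv.Perm (Fin m)) (b : Equiv.Perm (Fin (n - m))) (hm : m ≤ n) (k : Fin (n - m)) :
    ((topSet m (asmPerm s hs a b))ᶜ).orderEmbOfFin (card_compl_topSet hm (asmPerm s hs a b)) k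
      = sᶜ.orderEmbOfFin (card_compl_of_card_eq hs) k := by
  have hset : (topSet m (asmPerm s hs a b))ᶜ = sᶜ := by rw [topSet_asmPerm]
  have hmem : ∀ x : Fin (n - m),
      ((topSet m (asmPerm s hs a b))ᶜ).orderEmbOfFin (card_compl_topSet hm (asmPerm s hs a b)) x
        ∈ sᶜ := by
    intro x
    exact Finset.mem_of_subset (le_of_eq hset) (Finset.orderEmbOfFin_mem _ _ x)
  have h2 := Finset.orderEmbOfFin_unique (card_compl_of_card_eq hs) hmem
    ((((topSet m (asmPerm s hs a b))ᶜ).orderEmbOfFin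
      (card_compl_topSet hm (asmPerm s hs a b))).strictMono)
  exact congrFun h2 k

lemma iso_symm_orderEmb {n m : ℕ} (s : Finset (Fin n)) (hs : s.card = m) (k : Fin m)
    (h : s.orderEmbOfFin hs k ∈ s) :
    (s.orderIsoOfFin hs).symm ⟨s.orderEmbOfFin hs k, h⟩ = k := by
  have : (⟨s.orderEmbOfFin hs k, h⟩ : {x // x ∈ s}) = s.orderIsoOfFin hs k := by
    apply Subtype.ext
    exact (Finset.coe_orderIsoOfFin_apply s hs k).symm
  rw [this, OrderIso.symm_apply_apply]

lemma aPerm_asmPerm {n m : ℕ} (s : Finset (Fin n)) (hs : s.card = m)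
    (a : Equiv.Perm (Fin m)) (b : Equiv.Perm (Fin (n - m))) (hm : m ≤ n) :
    aPerm hm (asmPerm s hs a b) = a := by
  apply Equiv.ext
  intro k
  apply Fin.ext
  rw [aPerm_val, orderEmb_topSet_asm s hs a b hm k]
  have hmem : s.orderEmbOfFin hs k ∈ s := Finset.orderEmbOfFin_mem s hs k
  rw [asmPerm_val_mem s hs a b hmem, iso_symm_orderEmb s hs k hmem]
  omega

lemma bPerm_asmPerm {n m : ℕ} (s : Finset (Fin n)) (hs : s.card = m)
    (a : Equiv.Perm (Fin m)) (b : Equiv.Perm (Fin (n - m))) (hm : m ≤ n) :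
    bPerm hm (asmPerm s hs a b) = b := by
  apply Equiv.ext
  intro k
  apply Fin.ext
  rw [bPerm_val, orderEmb_compl_topSet_asm s hs a b hm k]
  have hmem : sᶜ.orderEmbOfFin (card_compl_of_card_eq hs) k ∈ sᶜ :=
    Finset.orderEmbOfFin_mem sᶜ (card_compl_of_card_eq hs) k
  rw [asmPerm_val_not_mem s hs a b (Finset.mem_compl.mp hmem)]
  exact congrArg (fun z => ((b z : Fin (n - m)) : ℕ))
    (iso_symm_orderEmb sᶜ (card_compl_of_card_eq hs) k hmem)

lemma asmPerm_roundtrip {n m : ℕ} (hm : m ≤ n) (u : Equiv.Perm (Fin n)) :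
    asmPerm (topSet m u) (card_topSet hm u) (aPerm hm u) (bPerm hm u) = u := by
  apply Equiv.ext
  intro p
  apply Fin.ext
  by_cases hp : p ∈ topSet m u
  · rw [asmPerm_val_mem _ _ _ _ hp]
    have htop : n - m ≤ (u p : ℕ) := (Finset.mem_filter.mp hp).2
    set k := ((topSet m u).orderIsoOfFin (card_topSet hm u)).symm ⟨p, hp⟩ with hk
    have hEk : (topSet m u).orderEmbOfFin (card_topSet hm u) k = p := by
      have h1 : ((topSet m u).orderIsoOfFin (card_topSet hm u)) k = ⟨p, hp⟩ := by
        rw [hk, OrderIso.apply_symm_apply]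
      have := congrArg Subtype.val h1
      rw [Finset.coe_orderIsoOfFin_apply] at this
      exact this
    rw [aPerm_val, hEk]
    omega
  · rw [asmPerm_val_not_mem _ _ _ _ hp]
    have hbot : ¬ n - m ≤ (u p : ℕ) := fun hc => hp (Finset.mem_filter.mpr ⟨Finset.mem_univ _, hc⟩)
    have hp' : p ∈ (topSet m u)ᶜ := Finset.mem_compl.mpr hp
    set k := (((topSet m u)ᶜ).orderIsoOfFin (card_compl_topSet hm u)).symm ⟨p, hp'⟩ with hk
    have hEk : ((topSet m u)ᶜ).orderEmbOfFin (card_compl_topSet hm u) k = p := by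
      have h1 : (((topSet m u)ᶜ).orderIsoOfFin (card_compl_topSet hm u)) k = ⟨p, hp'⟩ := by
        rw [hk, OrderIso.apply_symm_apply]
      have := congrArg Subtype.val h1
      rw [Finset.coe_orderIsoOfFin_apply] at this
      exact this
    rw [bPerm_val, hEk]
open scoped Classical in
lemma master {n m : ℕ} (hm : m ≤ n) (pA : Equiv.Perm (Fin m) → Prop)
    (pB : Equiv.Perm (Fin (n - m)) → Prop) :
    ∑ u ∈ Finset.univ.filter (fun u : Equiv.Perm (Fin n) => pA (aPerm hm u) ∧ pB (bPerm hm u)),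
      (X : Polynomial ℤ) ^ invCount u
    = (∑ s ∈ (Finset.univ : Finset (Fin n)).powersetCard m, (X : Polynomial ℤ) ^ crossN n s) *
      ((∑ a ∈ Finset.univ.filter pA, (X : Polynomial ℤ) ^ invCount a) *
       (∑ b ∈ Finset.univ.filter pB, (X : Polynomial ℤ) ^ invCount b)) := by
  have inner : ∀ s : Finset (Fin n),
      (∑ y ∈ (Finset.univ.filter pA ×ˢ Finset.univ.filter pB),
        (X : Polynomial ℤ) ^ (crossN n s + (invCount y.1 + invCount y.2)))
      = (X : Polynomial ℤ) ^ crossN n s *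
        ((∑ a ∈ Finset.univ.filter pA, (X : Polynomial ℤ) ^ invCount a) *
         (∑ b ∈ Finset.univ.filter pB, (X : Polynomial ℤ) ^ invCount b)) := by
    intro s
    rw [Finset.sum_product, Finset.sum_mul_sum, Finset.mul_sum]
    refine Finset.sum_congr rfl fun a _ => ?_
    rw [Finset.mul_sum]
    refine Finset.sum_congr rfl fun b _ => ?_
    rw [pow_add, pow_add]
  have hR : ∑ t ∈ ((Finset.univ : Finset (Fin n)).powersetCard m ×ˢ
          (Finset.univ.filter pA ×ˢ Finset.univ.filter pB)),
          (X : Polynomial ℤ) ^ (crossN n t.1 + (invCount t.2.1 + invCount t.2.2))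
      = (∑ s ∈ (Finset.univ : Finset (Fin n)).powersetCard m, (X : Polynomial ℤ) ^ crossN n s) *
      ((∑ a ∈ Finset.univ.filter pA, (X : Polynomial ℤ) ^ invCount a) *
       (∑ b ∈ Finset.univ.filter pB, (X : Polynomial ℤ) ^ invCount b)) := by
    rw [Finset.sum_product]
    rw [Finset.sum_mul]
    exact Finset.sum_congr rfl fun s _ => inner s
  rw [← hR]
  refine Finset.sum_bij' (fun u _ => (topSet m u, (aPerm hm u, bPerm hm u)))
    (fun t ht => asmPerm t.1 ((Finset.mem_powersetCard.mp (Finset.mem_product.mp ht).1).2)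
      t.2.1 t.2.2) ?_ ?_ ?_ ?_ ?_
  · intro u hu
    rw [Finset.mem_filter] at hu
    rw [Finset.mem_product, Finset.mem_product]
    exact ⟨Finset.mem_powersetCard.mpr ⟨Finset.subset_univ _, card_topSet hm u⟩,
      Finset.mem_filter.mpr ⟨Finset.mem_univ _, hu.2.1⟩,
      Finset.mem_filter.mpr ⟨Finset.mem_univ _, hu.2.2⟩⟩
  · intro t ht
    rw [Finset.mem_filter]
    have h1 := (Finset.mem_product.mp ht).2
    rw [Finset.mem_product] at h1
    refine ⟨Finset.mem_univ _, ?_, ?_⟩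
    · rw [aPerm_asmPerm _ _ _ _ hm]
      exact (Finset.mem_filter.mp h1.1).2
    · rw [bPerm_asmPerm _ _ _ _ hm]
      exact (Finset.mem_filter.mp h1.2).2
  · intro u hu
    exact asmPerm_roundtrip hm u
  · intro t ht
    apply Prod.ext
    · exact topSet_asmPerm _ _ _ _
    · apply Prod.ext
      · exact aPerm_asmPerm _ _ _ _ hm
      · exact bPerm_asmPerm _ _ _ _ hm
  · intro u hu
    rw [invCount_decomp hm u]

lemma invCount_one (N : ℕ) : invCount (1 : Equiv.Perm (Fin N)) = 0 := by
  unfold invCount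
  rw [Finset.card_eq_zero, Finset.filter_eq_empty_iff]
  intro p _
  intro h
  simp only [Equiv.Perm.coe_one, id] at h
  exact absurd h.1 (not_lt.mpr (le_of_lt h.2))

lemma sum_perm_small (N : ℕ) (hN : N ≤ 1) :
    ∑ u : Equiv.Perm (Fin N), (X : Polynomial ℤ) ^ invCount u = 1 := by
  have hsub : Subsingleton (Fin N) := ⟨fun a b => Fin.ext (by have := a.2; have := b.2; omega)⟩
  have huniq : ∀ u : Equiv.Perm (Fin N), u = 1 := fun u =>
    Equiv.ext fun x => @Subsingleton.elim _ hsub _ _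
  have huniv : (Finset.univ : Finset (Equiv.Perm (Fin N))) = {1} := by
    ext u
    simp [huniq u]
  rw [huniv, Finset.sum_singleton, invCount_one, pow_zero]

lemma crossN_singleton {N : ℕ} (p : Fin N) : crossN N {p} = N - 1 - (p : ℕ) := by
  unfold crossN
  have he : (Finset.univ.filter fun q : Fin N × Fin N =>
        q.1 ∈ ({p} : Finset (Fin N)) ∧ q.2 ∉ ({p} : Finset (Fin N)) ∧ q.1 < q.2)
      = {p} ×ˢ (Finset.univ.filter fun v : Fin N => (p : ℕ) + 1 ≤ (v : ℕ)) := by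
    ext q
    rw [Finset.mem_product, Finset.mem_filter, Finset.mem_filter]
    simp only [Finset.mem_singleton, Finset.mem_univ, true_and]
    constructor
    · rintro ⟨h1, h2, h3⟩
      have hv : (q.1 : ℕ) = (p : ℕ) := congrArg Fin.val h1
      rw [Fin.lt_def] at h3
      exact ⟨h1, by omega⟩
    · rintro ⟨h1, h2⟩
      have hv : (q.1 : ℕ) = (p : ℕ) := congrArg Fin.val h1
      refine ⟨h1, ?_, ?_⟩
      · intro hc
        have := congrArg Fin.val hc
        omega
      · rw [Fin.lt_def]
        omega
  rw [he, Finset.card_product, Finset.card_singleton, one_mul]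
  rw [card_filter_le_val ((p : ℕ) + 1) (by have := p.2; omega)]
  omega

lemma C1_eq (N : ℕ) :
    ∑ s ∈ (Finset.univ : Finset (Fin (N + 1))).powersetCard 1,
        (X : Polynomial ℤ) ^ crossN (N + 1) s
      = qnum (N + 1) := by
  rw [Finset.powersetCard_one, Finset.sum_map]
  simp only [Function.Embedding.coeFn_mk, crossN_singleton]
  rw [qnum]
  rw [Fin.sum_univ_eq_sum_range (fun k => (X : Polynomial ℤ) ^ (N + 1 - 1 - k)) (N + 1)]
  exact Finset.sum_range_reflect (fun i => (X : Polynomial ℤ) ^ i) (N + 1)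

lemma sum_perm_eq_qfact : ∀ N : ℕ,
    ∑ u : Equiv.Perm (Fin N), (X : Polynomial ℤ) ^ invCount u = qfact N := by
  intro N
  induction N with
  | zero =>
    rw [sum_perm_small 0 (by omega)]
    simp [qfact]
  | succ N ih =>
    classical
    have h := master (n := N + 1) (m := 1) (by omega) (fun _ => True) (fun _ => True)
    simp only [and_self, Finset.filter_true] at h
    rw [h, C1_eq N, sum_perm_small 1 le_rfl]
    have hb : ∑ b : Equiv.Perm (Fin (N + 1 - 1)), (X : Polynomial ℤ) ^ invCount b = qfact N := ih
    rw [hb]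
    have hq : qfact (N + 1) = qfact N * qnum (N + 1) := Finset.prod_range_succ _ N
    rw [hq]
    ring

lemma Iset_top_iff' {n m : ℕ} (hm : m ≤ n) (u : Equiv.Perm (Fin n)) {x y : Fin n}
    (hx : n - m ≤ (x : ℕ)) (hy : n - m ≤ (y : ℕ))
    (hx' : (x : ℕ) - (n - m) < m) (hy' : (y : ℕ) - (n - m) < m) :
    (x, y) ∈ Iset u
      ↔ ((⟨(x : ℕ) - (n - m), hx'⟩ : Fin m), (⟨(y : ℕ) - (n - m), hy'⟩ : Fin m))
          ∈ Iset (aPerm hm u) := by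
  have hxn : n - m + ((⟨(x : ℕ) - (n - m), hx'⟩ : Fin m) : ℕ) < n := by
    show n - m + ((x : ℕ) - (n - m)) < n
    have := x.2
    omega
  have hyn : n - m + ((⟨(y : ℕ) - (n - m), hy'⟩ : Fin m) : ℕ) < n := by
    show n - m + ((y : ℕ) - (n - m)) < n
    have := y.2
    omega
  have e1 : x = ⟨n - m + ((⟨(x : ℕ) - (n - m), hx'⟩ : Fin m) : ℕ), hxn⟩ := by
    apply Fin.ext
    show (x : ℕ) = n - m + ((x : ℕ) - (n - m))
    omega
  have e2 : y = ⟨n - m + ((⟨(y : ℕ) - (n - m), hy'⟩ : Fin m) : ℕ), hyn⟩ := by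
    apply Fin.ext
    show (y : ℕ) = n - m + ((y : ℕ) - (n - m))
    omega
  rw [← Iset_top_iff hm u ⟨(x : ℕ) - (n - m), hx'⟩ ⟨(y : ℕ) - (n - m), hy'⟩ hxn hyn, ← e1, ← e2]

lemma Iset_bot_iff' {n m : ℕ} (hm : m ≤ n) (u : Equiv.Perm (Fin n)) {x y : Fin n}
    (hx' : (x : ℕ) < n - m) (hy' : (y : ℕ) < n - m) :
    (x, y) ∈ Iset u
      ↔ ((⟨(x : ℕ), hx'⟩ : Fin (n - m)), (⟨(y : ℕ), hy'⟩ : Fin (n - m)))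
          ∈ Iset (bPerm hm u) := by
  have hxn : ((⟨(x : ℕ), hx'⟩ : Fin (n - m)) : ℕ) < n := by
    show (x : ℕ) < n
    exact x.2
  have hyn : ((⟨(y : ℕ), hy'⟩ : Fin (n - m)) : ℕ) < n := by
    show (y : ℕ) < n
    exact y.2
  have e1 : x = ⟨((⟨(x : ℕ), hx'⟩ : Fin (n - m)) : ℕ), hxn⟩ := by
    apply Fin.ext
    rfl
  have e2 : y = ⟨((⟨(y : ℕ), hy'⟩ : Fin (n - m)) : ℕ), hyn⟩ := by
    apply Fin.ext
    rfl
  rw [← Iset_bot_iff hm u ⟨(x : ℕ), hx'⟩ ⟨(y : ℕ), hy'⟩ hxn hyn, ← e1, ← e2]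

lemma mixed_in_Iset {n m : ℕ} (π : Equiv.Perm (Fin n))
    (Hπ : ∀ i : Fin n, (i : ℕ) < m ↔ n - m ≤ (π i : ℕ)) {x y : Fin n}
    (hxy : x < y) (hx : (x : ℕ) < n - m) (hy : n - m ≤ (y : ℕ)) : (x, y) ∈ Iset π := by
  rw [mem_Iset]
  refine ⟨hxy, ?_⟩
  have h1 : (π.symm y : ℕ) < m := (Hπ (π.symm y)).mpr (by rw [Equiv.apply_symm_apply]; exact hy)
  have h2 : ¬ (π.symm x : ℕ) < m := by
    intro hc
    have := (Hπ (π.symm x)).mp hc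
    rw [Equiv.apply_symm_apply] at this
    omega
  show π.symm y < π.symm x
  rw [Fin.lt_def]
  omega

lemma wle_decomp {n m : ℕ} (hm : m ≤ n) (π : Equiv.Perm (Fin n))
    (Hπ : ∀ i : Fin n, (i : ℕ) < m ↔ n - m ≤ (π i : ℕ)) (u : Equiv.Perm (Fin n)) :
    wle u π ↔ wle (aPerm hm u) (aPerm hm π) ∧ wle (bPerm hm u) (bPerm hm π) := by
  rw [wle_iff_subset, wle_iff_subset, wle_iff_subset]
  constructor
  · intro h
    constructor
    · intro q hq
      rw [← Prod.mk.eta (p := q)] at hq ⊢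
      have hx : n - m + (q.1 : ℕ) < n := by have := q.1.2; omega
      have hy : n - m + (q.2 : ℕ) < n := by have := q.2.2; omega
      rw [← Iset_top_iff hm u q.1 q.2 hx hy] at hq
      rw [← Iset_top_iff hm π q.1 q.2 hx hy]
      exact h hq
    · intro q hq
      rw [← Prod.mk.eta (p := q)] at hq ⊢
      have hx : (q.1 : ℕ) < n := by have := q.1.2; omega
      have hy : (q.2 : ℕ) < n := by have := q.2.2; omega
      rw [← Iset_bot_iff hm u q.1 q.2 hx hy] at hq
      rw [← Iset_bot_iff hm π q.1 q.2 hx hy]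
      exact h hq
  · rintro ⟨hA, hB⟩ q hq
    rw [← Prod.mk.eta (p := q)] at hq ⊢
    rw [mem_Iset] at hq
    obtain ⟨h12, hinv⟩ := hq
    have h12v : (q.1 : ℕ) < (q.2 : ℕ) := Fin.lt_def.mp h12
    have hq' : (q.1, q.2) ∈ Iset u := mem_Iset.mpr ⟨h12, hinv⟩
    by_cases h1 : n - m ≤ (q.1 : ℕ)
    · have h2 : n - m ≤ (q.2 : ℕ) := by omega
      have hx' : (q.1 : ℕ) - (n - m) < m := by have := q.1.2; omega
      have hy' : (q.2 : ℕ) - (n - m) < m := by have := q.2.2; omega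
      rw [Iset_top_iff' hm u h1 h2 hx' hy'] at hq'
      rw [Iset_top_iff' hm π h1 h2 hx' hy']
      exact hA hq'
    · by_cases h2 : n - m ≤ (q.2 : ℕ)
      · exact mixed_in_Iset π Hπ h12 (by omega) h2
      · have hx' : (q.1 : ℕ) < n - m := by omega
        have hy' : (q.2 : ℕ) < n - m := by omega
        rw [Iset_bot_iff' hm u hx' hy'] at hq'
        rw [Iset_bot_iff' hm π hx' hy']
        exact hB hq'

lemma exists_cut {n : ℕ} (hn : 0 < n) (π : Equiv.Perm (Fin n)) (hsep : IsSeparable π)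
    (hfl : π ⟨n - 1, Nat.sub_lt hn Nat.one_pos⟩ < π ⟨0, hn⟩) :
    ∃ m : ℕ, 1 ≤ m ∧ m < n ∧ ∀ i j : Fin n, (i : ℕ) < m → m ≤ (j : ℕ) → π j < π i := by
  classical
  by_contra hcon
  push_neg at hcon
  have hn2 : 2 ≤ n := by
    by_contra h
    have h1 : n = 1 := by omega
    subst h1
    exact absurd hfl (lt_irrefl _)
  set z : Fin n := ⟨0, hn⟩ with hz
  have hzv : (z : ℕ) = 0 := rfl
  have hJne : ∃ j : Fin n, π z < π j := by
    obtain ⟨i, j, hi, hj, hnlt⟩ := hcon 1 le_rfl (by omega)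
    have hi0 : i = z := Fin.ext (by omega)
    have hij : i ≠ j := fun e => by rw [e] at hi; omega
    have hne : π i ≠ π j := fun e => hij (π.injective e)
    exact ⟨j, hi0 ▸ lt_of_le_of_ne hnlt hne⟩
  set J := Finset.univ.filter fun j : Fin n => π z < π j with hJ
  have hJne' : J.Nonempty :=
    ⟨hJne.choose, Finset.mem_filter.mpr ⟨Finset.mem_univ _, hJne.choose_spec⟩⟩
  set jm := J.max' hJne' with hjmdef
  have hjm : π z < π jm := (Finset.mem_filter.mp (J.max'_mem hJne')).2
  have hjmax : ∀ j : Fin n, π z < π j → (j : ℕ) ≤ (jm : ℕ) := fun j hj =>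
    Fin.le_def.mp (Finset.le_max' J j (Finset.mem_filter.mpr ⟨Finset.mem_univ _, hj⟩))
  have hjm_lt : (jm : ℕ) < n - 1 := by
    have hne : (jm : ℕ) ≠ n - 1 := by
      intro e
      have he : jm = ⟨n - 1, by omega⟩ := Fin.ext e
      rw [he] at hjm
      exact absurd (lt_trans hjm hfl) (lt_irrefl _)
    have := jm.2
    omega
  obtain ⟨i', j', hi', hj', hnlt⟩ := hcon ((jm : ℕ) + 1) (by omega) (by omega)
  have hij' : π i' < π j' := by
    have hne : i' ≠ j' := fun e => by rw [e] at hi'; omega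
    exact lt_of_le_of_ne hnlt (fun e => hne (π.injective e))
  by_cases hcase : π z < π j'
  · have := hjmax j' hcase
    omega
  · have hj'z : π j' < π z := by
      rcases lt_or_eq_of_le (not_lt.mp hcase) with h | h
      · exact h
      · exfalso
        have he : j' = z := π.injective h
        have : (j' : ℕ) = 0 := by rw [he]
        omega
    have hi'z : π i' < π z := by
      rcases lt_trichotomy (π i') (π z) with h | h | h
      · exact h
      · exact absurd (h ▸ hij') hcase
      · exact absurd (lt_trans h hij') hcase
    have hi'0 : 0 < (i' : ℕ) := by
      by_contra h
      have : i' = z := Fin.ext (by omega)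
      rw [this] at hi'z
      exact absurd hi'z (lt_irrefl _)
    have hi'jm : (i' : ℕ) < (jm : ℕ) := by
      have hne : i' ≠ jm := fun e => by
        rw [e] at hi'z
        exact absurd (lt_trans hi'z hjm) (lt_irrefl _)
      have hv : (i' : ℕ) ≠ (jm : ℕ) := fun e => hne (Fin.ext e)
      omega
    exact hsep.1 ⟨z, i', jm, j',
      by rw [Fin.lt_def]; omega,
      by rw [Fin.lt_def]; omega,
      by rw [Fin.lt_def]; omega,
      hij', hj'z, hjm⟩

lemma cut_iff {n m : ℕ} (π : Equiv.Perm (Fin n)) (hm1 : 1 ≤ m) (hmn : m < n)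
    (hcut : ∀ i j : Fin n, (i : ℕ) < m → m ≤ (j : ℕ) → π j < π i) :
    ∀ i : Fin n, (i : ℕ) < m ↔ n - m ≤ (π i : ℕ) := by
  intro i
  constructor
  · intro hi
    have hsub : (Finset.univ.filter fun j : Fin n => m ≤ (j : ℕ)).image π
        ⊆ Finset.univ.filter fun v : Fin n => (v : ℕ) < (π i : ℕ) := by
      intro v hv
      rw [Finset.mem_image] at hv
      obtain ⟨j, hj, rfl⟩ := hv
      rw [Finset.mem_filter] at hj ⊢
      exact ⟨Finset.mem_univ _, Fin.lt_def.mp (hcut i j hi hj.2)⟩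
    have hcard := Finset.card_le_card hsub
    rw [Finset.card_image_of_injective _ π.injective,
      card_filter_le_val m (by omega), card_filter_lt_val _ (by have := (π i).2; omega)] at hcard
    omega
  · intro hi
    by_contra hc
    have him : m ≤ (i : ℕ) := by omega
    have hsub : (Finset.univ.filter fun j : Fin n => (j : ℕ) < m).image π
        ⊆ Finset.univ.filter fun v : Fin n => (π i : ℕ) + 1 ≤ (v : ℕ) := by
      intro v hv
      rw [Finset.mem_image] at hv
      obtain ⟨j, hj, rfl⟩ := hv
      rw [Finset.mem_filter] at hj ⊢
      refine ⟨Finset.mem_univ _, ?_⟩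
      have := Fin.lt_def.mp (hcut j i hj.2 him)
      omega
    have hcard := Finset.card_le_card hsub
    rw [Finset.card_image_of_injective _ π.injective,
      card_filter_lt_val m (by omega),
      card_filter_le_val _ (by have := (π i).2; omega)] at hcard
    have := (π i).2
    omega

lemma topSet_pi {n m : ℕ} (π : Equiv.Perm (Fin n))
    (Hπ : ∀ i : Fin n, (i : ℕ) < m ↔ n - m ≤ (π i : ℕ)) :
    topSet m π = Finset.univ.filter fun p : Fin n => (p : ℕ) < m := by
  ext p
  rw [topSet, Finset.mem_filter, Finset.mem_filter]
  exact and_congr_right fun _ => (Hπ p).symm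

lemma orderEmb_topSet_pi {n m : ℕ} (hm : m ≤ n) (π : Equiv.Perm (Fin n))
    (Hπ : ∀ i : Fin n, (i : ℕ) < m ↔ n - m ≤ (π i : ℕ)) (k : Fin m) :
    (topSet m π).orderEmbOfFin (card_topSet hm π) k = ⟨(k : ℕ), lt_of_lt_of_le k.2 hm⟩ := by
  have h := Finset.orderEmbOfFin_unique (card_topSet hm π)
    (f := fun k : Fin m => (⟨(k : ℕ), lt_of_lt_of_le k.2 hm⟩ : Fin n))
    (fun x => by rw [topSet_pi π Hπ, Finset.mem_filter]; exact ⟨Finset.mem_univ _, x.2⟩)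
    (fun a b hab => by rw [Fin.lt_def]; exact hab)
  exact (congrFun h k).symm

lemma orderEmb_compl_topSet_pi {n m : ℕ} (hm : m ≤ n) (π : Equiv.Perm (Fin n))
    (Hπ : ∀ i : Fin n, (i : ℕ) < m ↔ n - m ≤ (π i : ℕ)) (k : Fin (n - m)) :
    ((topSet m π)ᶜ).orderEmbOfFin (card_compl_topSet hm π) k
      = ⟨m + (k : ℕ), lt_of_lt_of_le (Nat.add_lt_add_left k.2 m) (by omega)⟩ := by
  have h := Finset.orderEmbOfFin_unique (card_compl_topSet hm π)
    (f := fun k : Fin (n - m) => (⟨m + (k : ℕ), by have := k.2; omega⟩ : Fin n))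
    (fun x => by
      rw [Finset.mem_compl, topSet_pi π Hπ, Finset.mem_filter]
      intro hc
      have h2 := hc.2
      dsimp only at h2
      omega)
    (fun a b hab => by
      rw [Fin.lt_def]
      dsimp only
      have := Fin.lt_def.mp hab
      omega)
  exact (congrFun h k).symm

/-- If `π ∈ S_n` is separable with `a_1 > a_n`, then `π` is the
concatenation of a block `π_A` on the letters `{n-m+1,…,n}` and a block `π_B` on the
letters `{1,…,n-m}` (0-indexed below; `σA`, `σB` are the renormalized blocks), and
`F(Λ_π, q) = [n choose m]_q · F(Λ_{σ_A}, q) · F(Λ_{σ_B}, q)`, where the Gaussian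
binomial coefficient `C` is characterized by `C · [m]! [n-m]! = [n]!`. -/
theorem FLam_eq_mul_of_first_gt_last (n : ℕ) (hn : 0 < n) (π : Equiv.Perm (Fin n))
    (hsep : IsSeparable π) (hfl : π ⟨n - 1, by omega⟩ < π ⟨0, hn⟩) :
    ∃ m : ℕ, ∃ _h1 : 1 ≤ m, ∃ hmn : m < n,
      (∀ i : Fin n, (i : ℕ) < m ↔ n - m ≤ (π i : ℕ)) ∧
      ∃ σA : Equiv.Perm (Fin m), ∃ σB : Equiv.Perm (Fin (n - m)),
        (∀ i : Fin m, (σA i : ℕ) + (n - m) = (π ⟨i, i.2.trans hmn⟩ : ℕ)) ∧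
        (∀ i : Fin (n - m),
          (σB i : ℕ) = (π ⟨m + i, by have := i.2; omega⟩ : ℕ)) ∧
        ∃ C : Polynomial ℤ, C * (qfact m * qfact (n - m)) = qfact n ∧
          FLam π = C * (FLam σA * FLam σB) := by
  classical
  obtain ⟨m, hm1, hmn, hcut⟩ := exists_cut hn π hsep hfl
  have hm : m ≤ n := le_of_lt hmn
  have Hπ := cut_iff π hm1 hmn hcut
  refine ⟨m, hm1, hmn, Hπ, aPerm hm π, bPerm hm π, ?_, ?_, ?_⟩
  · intro i
    rw [aPerm_val, orderEmb_topSet_pi hm π Hπ i]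
    have h := (Hπ ⟨(i : ℕ), i.2.trans hmn⟩).mp i.2
    omega
  · intro i
    rw [bPerm_val, orderEmb_compl_topSet_pi hm π Hπ i]
  · refine ⟨∑ s ∈ (Finset.univ : Finset (Fin n)).powersetCard m,
      (X : Polynomial ℤ) ^ crossN n s, ?_, ?_⟩
    · have h := master hm (fun _ => True) (fun _ => True)
      simp only [and_self, Finset.filter_true] at h
      rw [sum_perm_eq_qfact, sum_perm_eq_qfact, sum_perm_eq_qfact] at h
      exact h.symm
    · have h := master hm (fun a => wle a (aPerm hm π)) (fun b => wle b (bPerm hm π))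
      have hfil : (Finset.univ.filter fun u : Equiv.Perm (Fin n) =>
            wle (aPerm hm u) (aPerm hm π) ∧ wle (bPerm hm u) (bPerm hm π))
          = Finset.univ.filter fun u => wle u π := by
        apply Finset.filter_congr
        intro u _
        exact ((wle_decomp hm π Hπ u).symm : _)
      rw [hfil] at h
      rw [FLam, FLam, FLam]
      exact h

end SepPerm
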